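/- Every period eventually stabilizes: for any u ∈ Σ* and v ∈ Σ⁺, there exists i > 0 such that v^i is stable with respect to u (i.e., for all j > 0, col_u(v^i) = col_u((v^i)^j)). Moreover, if v is u-invariant then v^i is u-reliable. -/

import Mathlib

open scoped Classical

/-- Concatenation of a finite word with an infinite word. -/
def wcat {A : Type} (u : List A) (w : ℕ → A) : ℕ → A :=
  fun n => if h : n < u.length then u.get ⟨n, h⟩ else w (n - u.length)

/-- The infinite periodic word `v^ω`. -/
def wpow {A : Type} [Inhabited A] (v : List A) : ℕ → A :=
  fun n => v.getD (n % v.length) default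

/-- The ultimately periodic word `u · v^ω`. -/
def upw {A : Type} [Inhabited A] (u v : List A) : ℕ → A := wcat u (wpow v)

/-- The finite word `v^i`. -/
def wrep {A : Type} (v : List A) (i : ℕ) : List A := (List.replicate i v).flatten

/-- The right congruence `x ∼_L y`. -/
def simL {A : Type} (L : Set (ℕ → A)) (x y : List A) : Prop :=
  ∀ w : ℕ → A, wcat x w ∈ L ↔ wcat y w ∈ L

/-- `w` is `u`-invariant: `u ∼_L u·w`. -/
def UInv {A : Type} (L : Set (ℕ → A)) (u w : List A) : Prop := simL L u (u ++ w)

/-- `v` is relevant to `u`. -/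
def URel {A : Type} (L : Set (ℕ → A)) (u v : List A) : Prop :=
  ∃ z : List A, UInv L u (v ++ z)

/-- `v` has natural color at most `c` wrt `u`. -/
def ColorAtMost {A : Type} [Inhabited A] (L : Set (ℕ → A)) (u : List A) :
    ℕ → List A → Prop
  | c, v => ∀ z : List A, UInv L u (v ++ z) →
      ((upw u (v ++ z) ∈ L ↔ Even c) ∨
        ∃ i : ℕ, 0 < i ∧ ∃ c' : Fin c, ColorAtMost L u c' (wrep (v ++ z) i))
  termination_by c => c
  decreasing_by exact c'.isLt

/-- The natural color of the finite word `v` wrt `u`: `⊥` (i.e. `-∞`) if `v` is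
irrelevant to `u`, and otherwise the minimal `c ≥ 0` as in the paper. -/
noncomputable def ncol {A : Type} [Inhabited A] (L : Set (ℕ → A)) (u v : List A) :
    WithBot ℕ :=
  if URel L u v then ((sInf {c : ℕ | ColorAtMost L u c v} : ℕ) : WithBot ℕ) else ⊥

/-- `v` is stable wrt `u`. -/
def Stable {A : Type} [Inhabited A] (L : Set (ℕ → A)) (u v : List A) : Prop :=
  ∀ i : ℕ, 0 < i → ncol L u v = ncol L u (wrep v i)

/-- `v` is `u`-reliable. -/
def UReliable {A : Type} [Inhabited A] (L : Set (ℕ → A)) (u v : List A) : Prop :=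
  UInv L u v ∧ Stable L u v

/-- The natural color of an ultimately periodic infinite word. -/
noncomputable def icol {A : Type} [Inhabited A] (L : Set (ℕ → A)) (w : ℕ → A) : ℕ :=
  sInf {c : ℕ | ∃ u v : List A, v ≠ [] ∧ w = upw u v ∧ UInv L u v ∧
    ncol L u v = (c : WithBot ℕ)}

/-- The set of states visited infinitely often by a run. -/
def infSet {Q : Type} (r : ℕ → Q) : Set Q := {q | ∀ n : ℕ, ∃ m : ℕ, n ≤ m ∧ r m = q}

/-- The run of a complete deterministic automaton on an infinite word. -/
def runOf {A Q : Type} (δ : Q → A → Q) (q0 : Q) (w : ℕ → A) : ℕ → Q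
  | 0 => q0
  | n + 1 => δ (runOf δ q0 w n) (w n)

/-- `L` is ω-regular: recognized by some deterministic Muller automaton. -/
def OmegaRegular {A : Type} (L : Set (ℕ → A)) : Prop :=
  ∃ (Q : Type) (_ : Fintype Q) (q0 : Q) (δ : Q → A → Q) (α : Set (Set Q)),
    ∀ w : ℕ → A, w ∈ L ↔ infSet (runOf δ q0 w) ∈ α


lemma wcat_append {A : Type} (x y : List A) (w : ℕ → A) :
    wcat (x ++ y) w = wcat x (wcat y w) := by
  funext n
  simp only [wcat, List.length_append, List.get_eq_getElem]
  split_ifs with h1 h2 h3 h4 h5 <;> try omega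
  · exact List.getElem_append_left h2
  · rw [List.getElem_append_right (by omega)]
  · congr 1; omega

lemma wrep_succ {A : Type} (v : List A) (i : ℕ) : wrep v (i+1) = v ++ wrep v i := by
  simp [wrep, List.replicate_succ]

lemma wrep_add {A : Type} (v : List A) (a b : ℕ) :
    wrep v (a + b) = wrep v a ++ wrep v b := by
  induction a with
  | zero => simp [wrep]
  | succ n ih => rw [Nat.succ_add, wrep_succ, wrep_succ, ih, List.append_assoc]

lemma wrep_mul {A : Type} (v : List A) (a b : ℕ) :
    wrep v (a * b) = wrep (wrep v a) b := by
  induction b with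
  | zero => simp [wrep]
  | succ n ih =>
      have h : a * (n+1) = a + a * n := by ring
      rw [h, wrep_add, wrep_succ, ih]

lemma colorAtMost_def {A : Type} [Inhabited A] (L : Set (ℕ → A)) (u : List A)
    (c : ℕ) (v : List A) : ColorAtMost L u c v ↔ ∀ z : List A, UInv L u (v ++ z) →
      ((upw u (v ++ z) ∈ L ↔ Even c) ∨
        ∃ i : ℕ, 0 < i ∧ ∃ c' : Fin c, ColorAtMost L u c' (wrep (v ++ z) i)) := by
  rw [ColorAtMost]

lemma wrep_eq_cons {A : Type} (v : List A) (i : ℕ) (hi : 0 < i) (z : List A) :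
    wrep v i ++ z = v ++ (wrep v (i-1) ++ z) := by
  obtain ⟨k, rfl⟩ := Nat.exists_eq_add_of_lt hi
  simp only [Nat.zero_add, wrep_succ, Nat.add_sub_cancel, List.append_assoc]

lemma colorAtMost_wrep {A : Type} [Inhabited A] (L : Set (ℕ → A)) (u : List A)
    (c : ℕ) (v : List A) (i : ℕ) (hi : 0 < i) (h : ColorAtMost L u c v) :
    ColorAtMost L u c (wrep v i) := by
  rw [colorAtMost_def] at h ⊢
  intro z hz
  rw [wrep_eq_cons v i hi] at hz ⊢
  exact h _ hz

lemma urel_of_urel_wrep {A : Type} (L : Set (ℕ → A)) (u v : List A) (i : ℕ)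
    (hi : 0 < i) (h : URel L u (wrep v i)) : URel L u v := by
  obtain ⟨z, hz⟩ := h
  rw [wrep_eq_cons v i hi] at hz
  exact ⟨_, hz⟩

lemma uinv_wrep {A : Type} (L : Set (ℕ → A)) (u v : List A) (h : UInv L u v)
    (i : ℕ) : UInv L u (wrep v i) := by
  induction i with
  | zero => intro w; simp [wrep]
  | succ n ih =>
      intro w
      have h1 := h w
      have h2 := ih (wcat v w)
      have e1 : wrep v (n+1) = wrep v n ++ v := by
        rw [show n + 1 = n + 1 from rfl, wrep_add]
        congr 1
        simp [wrep]
      rw [e1, ← List.append_assoc, wcat_append (u ++ wrep v n) v]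
      rw [wcat_append] at h1
      exact h1.trans h2

/-- Refined color data: `⊥` if irrelevant, `⊤` if relevant but no color bound works,
otherwise the minimal color. -/
noncomputable def gcol {A : Type} [Inhabited A] (L : Set (ℕ → A)) (u v : List A)
    (i : ℕ) : WithTop (WithBot ℕ) :=
  if URel L u (wrep v i) then
    if h : {c : ℕ | ColorAtMost L u c (wrep v i)}.Nonempty then
      (((sInf {c : ℕ | ColorAtMost L u c (wrep v i)} : ℕ) : WithBot ℕ) : WithTop (WithBot ℕ))
    else ⊤
  else ((⊥ : WithBot ℕ) : WithTop (WithBot ℕ))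

lemma ncol_eq_gcol {A : Type} [Inhabited A] (L : Set (ℕ → A)) (u v : List A) (i : ℕ) :
    ncol L u (wrep v i) = (gcol L u v i).untopD ((0 : ℕ) : WithBot ℕ) := by
  rw [ncol, gcol]
  split_ifs with h1 h2
  · rw [WithTop.untopD_coe]
  · rw [Set.not_nonempty_iff_eq_empty] at h2
    rw [h2, Nat.sInf_empty, WithTop.untopD_top]
  · rw [WithTop.untopD_coe]

lemma gcol_anti {A : Type} [Inhabited A] (L : Set (ℕ → A)) (u v : List A)
    (a b : ℕ) (ha : 0 < a) (hab : a ∣ b) (hb : 0 < b) :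
    gcol L u v b ≤ gcol L u v a := by
  obtain ⟨m, rfl⟩ := hab
  have hm : 0 < m := Nat.pos_of_ne_zero (by rintro rfl; simp at hb)
  have hw : wrep v (a * m) = wrep (wrep v a) m := wrep_mul v a m
  by_cases hR : URel L u (wrep v (a * m))
  · have hRa : URel L u (wrep v a) := by
      apply urel_of_urel_wrep L u (wrep v a) m hm
      rwa [← hw]
    have hsub : {c : ℕ | ColorAtMost L u c (wrep v a)} ⊆
        {c : ℕ | ColorAtMost L u c (wrep v (a * m))} := by
      intro c hc
      rw [Set.mem_setOf_eq, hw]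
      exact colorAtMost_wrep L u c (wrep v a) m hm hc
    by_cases hne : {c : ℕ | ColorAtMost L u c (wrep v a)}.Nonempty
    · have hne' : {c : ℕ | ColorAtMost L u c (wrep v (a * m))}.Nonempty :=
        hne.mono hsub
      rw [gcol, gcol, if_pos hR, if_pos hRa, dif_pos hne, dif_pos hne']
      exact_mod_cast Nat.sInf_le (hsub (Nat.sInf_mem hne))
    · have : gcol L u v a = ⊤ := by rw [gcol, if_pos hRa, dif_neg hne]
      rw [this]
      exact le_top
  · have : gcol L u v (a * m) = ((⊥ : WithBot ℕ) : WithTop (WithBot ℕ)) := by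
      rw [gcol, if_neg hR]
    rw [this]
    exact bot_le

lemma gcol_eventually_const {A : Type} [Inhabited A] (L : Set (ℕ → A)) (u v : List A) :
    ∃ N : ℕ, ∀ k : ℕ, N ≤ k →
      gcol L u v (Nat.factorial (k+1)) = gcol L u v (Nat.factorial (N+1)) := by
  have hwf : WellFounded ((· < ·) : WithTop (WithBot ℕ) → WithTop (WithBot ℕ) → Prop) :=
    wellFounded_lt
  obtain ⟨m, hmem, hmin⟩ := hwf.has_min
    (Set.range fun k : ℕ => gcol L u v (Nat.factorial (k+1))) ⟨_, 0, rfl⟩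
  obtain ⟨N, hN⟩ := hmem
  simp only at hN
  refine ⟨N, fun k hk => ?_⟩
  have hle : gcol L u v (Nat.factorial (k+1)) ≤ gcol L u v (Nat.factorial (N+1)) :=
    gcol_anti L u v _ _ (Nat.factorial_pos _)
      (Nat.factorial_dvd_factorial (by omega)) (Nat.factorial_pos _)
  have hnlt := hmin _ ⟨k, rfl⟩
  simp only at hnlt
  rw [← hN] at hnlt
  exact le_antisymm hle (not_lt.1 hnlt)


/-- every period eventually stabilizes; if moreover `v` is `u`-invariant
then the stabilized power is `u`-reliable. -/
theorem period_eventually_stabilizes {A : Type} [Inhabited A] (L : Set (ℕ → A))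
    (hreg : OmegaRegular L) (u v : List A) (hv : v ≠ []) :
    ∃ i : ℕ, 0 < i ∧ Stable L u (wrep v i) ∧
      (UInv L u v → UReliable L u (wrep v i)) := by
  obtain ⟨N, hN⟩ := gcol_eventually_const L u v
  have hstab : Stable L u (wrep v (Nat.factorial (N+1))) := by
    intro j hj
    set i := Nat.factorial (N+1) with hidef
    rw [← wrep_mul, ncol_eq_gcol, ncol_eq_gcol]
    congr 1
    have hipos : 0 < i := Nat.factorial_pos _
    have hijpos : 0 < i * j := Nat.mul_pos hipos hj
    have h1 : gcol L u v (i*j) ≤ gcol L u v i :=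
      gcol_anti L u v _ _ hipos ⟨j, rfl⟩ hijpos
    have h2 : gcol L u v (Nat.factorial (i*j+1)) ≤ gcol L u v (i*j) :=
      gcol_anti L u v _ _ hijpos (Nat.dvd_factorial hijpos (by omega))
        (Nat.factorial_pos _)
    have hNle : N ≤ i * j := by
      have := Nat.self_le_factorial (N+1)
      calc N ≤ N + 1 := by omega
        _ ≤ i := this
        _ ≤ i * j := Nat.le_mul_of_pos_right i hj
    have h3 : gcol L u v (Nat.factorial (i*j+1)) = gcol L u v i := hN _ hNle
    rw [h3] at h2
    exact le_antisymm h2 h1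
  exact ⟨Nat.factorial (N+1), Nat.factorial_pos _, hstab,
    fun huinv => ⟨uinv_wrep L u v huinv _, hstab⟩⟩
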